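/- Let φ : G → G' be a surjective group homomorphism with kernel H, let 1 → G → E →^q Γ → 1 and 1 → G' → E' →^{q'} Γ → 1 be group extensions, and let φ̃ : E → E' be a homomorphism restricting to φ on G and satisfying q' ∘ φ̃ = q. Suppose ς : Γ → E' is a homomorphic section of q'. Then E_ς := φ̃⁻¹(ς(Γ)) fits into an exact sequence 1 → H → E_ς → Γ → 1; in particular q restricted to E_ς is surjective and its kernel equals H. -/
import Mathlib

/-- Dévissage lemma (group-theoretic form). Given extensions `1 → G → E → Γ → 1` and
`1 → G' → E' → Γ → 1` (with `G = ker q`, `G' = ker q'`), a homomorphism `φ̃ : E → E'`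
over `Γ` restricting to a surjection `φ : G → G'` (whose kernel is `H = ker φ̃`),
and a homomorphic section `ς` of `q'`, the subgroup `E_ς = φ̃⁻¹(ς(Γ))` fits into an
exact sequence `1 → H → E_ς → Γ → 1`: `q` restricted to `E_ς` is surjective and its
kernel is exactly `H`. -/
theorem devissage {E E' Γ : Type*} [Group E] [Group E'] [Group Γ]
    (q : E →* Γ) (q' : E' →* Γ)
    (hq : Function.Surjective q) (hq' : Function.Surjective q')
    (φ : E →* E') (hcomp : ∀ e : E, q' (φ e) = q e)
    (hφsurj : ∀ g' ∈ q'.ker, ∃ g ∈ q.ker, φ g = g')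
    (ς : Γ →* E') (hς : ∀ s : Γ, q' (ς s) = s) :
    (∀ s : Γ, ∃ α : E, φ α ∈ Set.range ς ∧ q α = s) ∧
    (∀ α : E, (φ α ∈ Set.range ς ∧ q α = 1) ↔ φ α = 1) := by
  constructor
  · intro s
    obtain ⟨β, hβ⟩ := hq s
    have hker : φ β * (ς s)⁻¹ ∈ q'.ker := by
      simp [MonoidHom.mem_ker, hcomp, hβ, hς]
    obtain ⟨g, hg, hgφ⟩ := hφsurj _ hker
    refine ⟨g⁻¹ * β, ⟨s, ?_⟩, ?_⟩
    · have : φ (g⁻¹ * β) = (φ g)⁻¹ * φ β := by simp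
      rw [this, hgφ]
      group
    · simpa [MonoidHom.mem_ker.mp hg, hβ] using (map_mul q g⁻¹ β)
  · intro α
    constructor
    · rintro ⟨⟨t, ht⟩, hα⟩
      have : t = 1 := by
        have := hcomp α
        rw [← ht, hς, hα] at this
        exact this
      rw [← ht, this, map_one]
    · intro h
      exact ⟨⟨1, by simp [h]⟩, by rw [← hcomp, h, map_one]⟩
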